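/- arXiv:1808.05240 — 4 statements merged into one kernel-verified Lean document; each statement's English description precedes it below -/
import Mathlib

section
/- Let w, w̃ ∈ R^n be nonzero with ‖w̃‖ ≥ ‖w‖ = c > 0, let w* ∈ R^n be a unit vector, and let θ(u, w*) = arccos(⟨u,w*⟩/‖u‖) denote the angle between a nonzero vector u and w*. Then |θ(w, w*) − θ(w̃, w*)| ≤ (π/(2c)) · ‖w − w̃‖. -/
open InnerProductGeometry RealInnerProductSpace

section Aux

variable {E : Type*} [NormedAddCommGroup E] [InnerProductSpace ℝ E]

private lemma arccos_antitone {x y : ℝ} (hxy : x ≤ y) :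
    Real.arccos y ≤ Real.arccos x := by
  rw [Real.arccos_eq_pi_div_two_sub_arcsin, Real.arccos_eq_pi_div_two_sub_arcsin]
  have := Real.monotone_arcsin hxy
  linarith

private lemma angle_unit (u v : E) (hu : ‖u‖ = 1) (hv : ‖v‖ = 1) :
    angle u v = Real.arccos ⟪u, v⟫ := by
  rw [angle, hu, hv]; norm_num

/-- Triangle inequality for angles between unit vectors. -/
private lemma angle_triangle_unit (u v w : E)
    (hu : ‖u‖ = 1) (hv : ‖v‖ = 1) (hw : ‖w‖ = 1) :
    angle u w ≤ angle u v + angle v w := by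
  set a : ℝ := ⟪u, v⟫ with ha
  set b : ℝ := ⟪v, w⟫ with hb
  have ha1 : |a| ≤ 1 := by
    rw [ha]; simpa [hu, hv] using abs_real_inner_le_norm u v
  have hb1 : |b| ≤ 1 := by
    rw [hb]; simpa [hv, hw] using abs_real_inner_le_norm v w
  have ha1' := abs_le.mp ha1
  have hb1' := abs_le.mp hb1
  have hvv : ⟪v, v⟫ = 1 := by
    rw [real_inner_self_eq_norm_sq, hv]; norm_num
  -- norms of the orthogonal components
  have hUn : ‖u - a • v‖ ^ 2 = 1 - a ^ 2 := by
    rw [norm_sub_sq_real, real_inner_smul_right, ← ha, norm_smul, hu, hv, Real.norm_eq_abs,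
      mul_one, sq_abs]
    ring
  have hwv : ⟪w, v⟫ = b := by rw [real_inner_comm, ← hb]
  have hWn : ‖w - b • v‖ ^ 2 = 1 - b ^ 2 := by
    rw [norm_sub_sq_real, real_inner_smul_right, hwv, norm_smul, hw, hv, Real.norm_eq_abs,
      mul_one, sq_abs]
    ring
  have hUn' : ‖u - a • v‖ = Real.sqrt (1 - a ^ 2) := by
    rw [← hUn, Real.sqrt_sq (norm_nonneg _)]
  have hWn' : ‖w - b • v‖ = Real.sqrt (1 - b ^ 2) := by
    rw [← hWn, Real.sqrt_sq (norm_nonneg _)]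
  have hkey : a * b - Real.sqrt (1 - a ^ 2) * Real.sqrt (1 - b ^ 2) ≤ ⟪u, w⟫ := by
    have hcs : |⟪u - a • v, w - b • v⟫| ≤ Real.sqrt (1 - a ^ 2) * Real.sqrt (1 - b ^ 2) := by
      rw [← hUn', ← hWn']; exact abs_real_inner_le_norm _ _
    have hexp : ⟪u - a • v, w - b • v⟫ = ⟪u, w⟫ - a * b := by
      rw [inner_sub_left, inner_sub_right, inner_sub_right, real_inner_smul_left,
        real_inner_smul_left, real_inner_smul_right, real_inner_smul_right, hvv, ← ha, ← hb]
      ring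
    have := neg_abs_le ⟪u - a • v, w - b • v⟫
    rw [hexp] at this hcs
    have := abs_le.mp hcs
    linarith [this.1]
  -- angles as arccos
  rw [angle_unit u w hu hw, angle_unit u v hu hv, angle_unit v w hv hw]
  set A := Real.arccos a with hA
  set B := Real.arccos b with hB
  have hcosAB : Real.cos (A + B) = a * b - Real.sqrt (1 - a ^ 2) * Real.sqrt (1 - b ^ 2) := by
    rw [Real.cos_add, hA, hB, Real.cos_arccos ha1'.1 ha1'.2, Real.cos_arccos hb1'.1 hb1'.2,
      Real.sin_arccos, Real.sin_arccos]
  by_cases hle : A + B ≤ Real.pi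
  · have h0 : 0 ≤ A + B := by
      have := Real.arccos_nonneg a; have := Real.arccos_nonneg b; linarith
    calc Real.arccos ⟪u, w⟫ ≤ Real.arccos (Real.cos (A + B)) := by
          apply arccos_antitone; rw [hcosAB]; exact hkey
      _ = A + B := Real.arccos_cos h0 hle
  · exact (Real.arccos_le_pi _).trans (le_of_not_ge hle)

/-- Chord bound: for unit vectors, `angle u v ≤ (π/2) ‖u - v‖`. -/
private lemma angle_le_chord (u v : E) (hu : ‖u‖ = 1) (hv : ‖v‖ = 1) :
    angle u v ≤ Real.pi / 2 * ‖u - v‖ := by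
  set θ := angle u v with hθ
  have hθ0 : 0 ≤ θ := angle_nonneg u v
  have hθπ : θ ≤ Real.pi := angle_le_pi u v
  have hcos : Real.cos θ = ⟪u, v⟫ := by
    rw [hθ, cos_angle, hu, hv]; norm_num
  have hchord : ‖u - v‖ ^ 2 = 2 - 2 * Real.cos θ := by
    rw [norm_sub_sq_real, hu, hv, hcos]; ring
  have hjordan : Real.cos θ ≤ 1 - 2 / Real.pi ^ 2 * θ ^ 2 :=
    Real.cos_le_one_sub_mul_cos_sq (by rw [abs_of_nonneg hθ0]; exact hθπ)
  have hpi : (0:ℝ) < Real.pi := Real.pi_pos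
  have h2 : (2 / Real.pi * θ) ^ 2 ≤ ‖u - v‖ ^ 2 := by
    rw [hchord]
    have hkey : (2 / Real.pi * θ) ^ 2 = 2 * (2 / Real.pi ^ 2 * θ ^ 2) := by
      field_simp
    rw [hkey]; linarith
  have h3 : 2 / Real.pi * θ ≤ ‖u - v‖ :=
    (abs_le_of_sq_le_sq' h2 (norm_nonneg _)).2
  calc θ = Real.pi / 2 * (2 / Real.pi * θ) := by field_simp
    _ ≤ Real.pi / 2 * ‖u - v‖ := by
        have : (0:ℝ) ≤ Real.pi / 2 := by positivity
        nlinarith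

end Aux

/-- For nonzero `w, w̃` with `‖w̃‖ ≥ ‖w‖ = c > 0` and unit `w*`,
`|θ(w, w*) − θ(w̃, w*)| ≤ (π/(2c)) ‖w − w̃‖`. -/
theorem angle_lipschitz {n : ℕ}
    (w wt ws : EuclideanSpace ℝ (Fin n)) (hw : w ≠ 0) (hwt : wt ≠ 0)
    (hws : ‖ws‖ = 1)
    (c : ℝ) (hc : ‖w‖ = c) (hcpos : 0 < c) (h : c ≤ ‖wt‖) :
    |angle w ws - angle wt ws| ≤ Real.pi / (2 * c) * ‖w - wt‖ := by
  have hwn : (0:ℝ) < ‖w‖ := by rw [hc]; exact hcpos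
  have hwtn : (0:ℝ) < ‖wt‖ := lt_of_lt_of_le hcpos h
  set u : EuclideanSpace ℝ (Fin n) := ‖w‖⁻¹ • w with hu
  set v : EuclideanSpace ℝ (Fin n) := ‖wt‖⁻¹ • wt with hv
  have hun : ‖u‖ = 1 := by
    rw [hu, norm_smul, norm_inv, norm_norm, inv_mul_cancel₀ hwn.ne']
  have hvn : ‖v‖ = 1 := by
    rw [hv, norm_smul, norm_inv, norm_norm, inv_mul_cancel₀ hwtn.ne']
  have hau : angle w ws = angle u ws := by
    rw [hu, angle_smul_left_of_pos _ _ (inv_pos.mpr hwn)]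
  have hav : angle wt ws = angle v ws := by
    rw [hv, angle_smul_left_of_pos _ _ (inv_pos.mpr hwtn)]
  have hauv : angle w wt = angle u v := by
    rw [hu, hv, angle_smul_left_of_pos _ _ (inv_pos.mpr hwn),
      angle_smul_right_of_pos _ _ (inv_pos.mpr hwtn)]
  -- Step 1: triangle inequality
  have h1 : |angle w ws - angle wt ws| ≤ angle u v := by
    rw [hau, hav, abs_sub_le_iff]
    constructor
    · have := angle_triangle_unit u v ws hun hvn hws
      linarith
    · have := angle_triangle_unit v u ws hvn hun hws
      rw [angle_comm v u] at this
      linarith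
  -- Step 2: chord bound
  have h2 : angle u v ≤ Real.pi / 2 * ‖u - v‖ := angle_le_chord u v hun hvn
  -- Step 3: ‖c • (u - v)‖ = ‖w - c/‖wt‖ • wt‖ ≤ ‖w - wt‖
  have h3 : c * ‖u - v‖ ≤ ‖w - wt‖ := by
    have hcuv : c • (u - v) = w - (c / ‖wt‖) • wt := by
      rw [smul_sub, hu, hv, smul_smul, smul_smul, ← hc, mul_inv_cancel₀ hwn.ne', one_smul,
        div_eq_mul_inv]
    have hsq : ‖w - (c / ‖wt‖) • wt‖ ^ 2 ≤ ‖w - wt‖ ^ 2 := by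
      rw [norm_sub_sq_real, norm_sub_sq_real, real_inner_smul_right, norm_smul,
        Real.norm_eq_abs, abs_of_pos (div_pos hcpos hwtn)]
      have hcs : ⟪w, wt⟫ ≤ ‖w‖ * ‖wt‖ := real_inner_le_norm w wt
      rw [hc] at hcs ⊢
      have ht : c / ‖wt‖ ≤ 1 := (div_le_one hwtn).mpr h
      have hexp : (c / ‖wt‖ * ‖wt‖) = c := by field_simp
      rw [hexp]
      nlinarith [sq_nonneg (‖wt‖ - c), mul_le_mul_of_nonneg_right hcs (sub_nonneg.mpr ht),
        hexp, hwtn]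
    have hle := (abs_le_of_sq_le_sq' hsq (norm_nonneg _)).2
    calc c * ‖u - v‖ = ‖c • (u - v)‖ := by
          rw [norm_smul, Real.norm_eq_abs, abs_of_pos hcpos]
      _ = ‖w - (c / ‖wt‖) • wt‖ := by rw [hcuv]
      _ ≤ ‖w - wt‖ := hle
  calc |angle w ws - angle wt ws| ≤ Real.pi / 2 * ‖u - v‖ := h1.trans h2
    _ = Real.pi / (2 * c) * (c * ‖u - v‖) := by field_simp
    _ ≤ Real.pi / (2 * c) * ‖w - wt‖ := by
        apply mul_le_mul_of_nonneg_left h3 (by positivity)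
end

section
/- Let f: R^M → R be differentiable with L-Lipschitz gradient, let Q ⊂ R^M be a nonempty closed set, and consider the blended gradient descent update w_f^{t+1} = (1−ρ)w_f^t + ρ w^t − η ∇f(w^t), w^{t+1} ∈ argmin_{w ∈ Q} ‖w − w_f^{t+1}‖², where w^t ∈ Q. Then for ρ ∈ (0,1): f(w^{t+1}) − f(w^t) ≤ −(1/2)[((1−ρ)/η)(‖w^{t+1} − w_f^t‖² − ‖w^t − w_f^t‖²) + (ρ/η − L)‖w^{t+1} − w^t‖²]. -/
open scoped NNReal

section Aux

variable {E : Type*} [NormedAddCommGroup E] [InnerProductSpace ℝ E] [CompleteSpace E]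

local notation "⟪" x ", " y "⟫" => @inner ℝ _ _ x y

lemma gradient_inner_eq (f : E → ℝ) (p v : E) :
    ⟪gradient f p, v⟫ = fderiv ℝ f p v := by
  simp [gradient, InnerProductSpace.toDual_symm_apply]

/-- The descent lemma for functions with Lipschitz gradient. -/
lemma descent_lemma (f : E → ℝ) (hf : Differentiable ℝ f) (L : ℝ≥0)
    (hL : LipschitzWith L (gradient f)) (x y : E) :
    f y ≤ f x + ⟪gradient f x, y - x⟫ + (L : ℝ) / 2 * ‖y - x‖ ^ 2 := by
  set b := y - x with hb
  have hc : ∀ t : ℝ, HasDerivAt (fun t : ℝ => x + t • b) b t := by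
    intro t
    simpa using ((hasDerivAt_id t).smul_const b).const_add x
  have hφ : ∀ t : ℝ, HasDerivAt (fun t : ℝ => f (x + t • b))
      ⟪gradient f (x + t • b), b⟫ t := by
    intro t
    have h1 : HasFDerivAt f (fderiv ℝ f (x + t • b)) (x + t • b) := (hf _).hasFDerivAt
    have h2 := h1.comp_hasDerivAt t (hc t)
    rw [gradient_inner_eq]; exact h2
  have hgcont : Continuous (gradient f) := hL.continuous
  have hcont : Continuous fun t : ℝ => ⟪gradient f (x + t • b), b⟫ := by
    exact (hgcont.comp (by continuity)).inner continuous_const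
  have hint : f (x + (1 : ℝ) • b) - f (x + (0 : ℝ) • b)
      = ∫ t in (0:ℝ)..1, ⟪gradient f (x + t • b), b⟫ :=
    (intervalIntegral.integral_eq_sub_of_hasDerivAt (fun t _ => hφ t)
      (hcont.intervalIntegrable 0 1)).symm
  have hbound : ∀ t ∈ Set.Icc (0:ℝ) 1,
      ⟪gradient f (x + t • b), b⟫ ≤ ⟪gradient f x, b⟫ + (L : ℝ) * ‖b‖ ^ 2 * t := by
    intro t ht
    have h3 : ⟪gradient f (x + t • b) - gradient f x, b⟫
        ≤ ‖gradient f (x + t • b) - gradient f x‖ * ‖b‖ := real_inner_le_norm _ _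
    have h4 : ‖gradient f (x + t • b) - gradient f x‖ ≤ (L : ℝ) * (t * ‖b‖) := by
      have := hL.dist_le_mul (x + t • b) x
      simpa [dist_eq_norm, norm_smul, abs_of_nonneg ht.1] using this
    have h5 : ‖gradient f (x + t • b) - gradient f x‖ * ‖b‖ ≤ (L : ℝ) * (t * ‖b‖) * ‖b‖ :=
      mul_le_mul_of_nonneg_right h4 (norm_nonneg b)
    have h6 : ⟪gradient f (x + t • b) - gradient f x, b⟫
        = ⟪gradient f (x + t • b), b⟫ - ⟪gradient f x, b⟫ := inner_sub_left _ _ _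
    nlinarith [sq_nonneg ‖b‖]
  have hImono : (∫ t in (0:ℝ)..1, ⟪gradient f (x + t • b), b⟫)
      ≤ ∫ t in (0:ℝ)..1, (⟪gradient f x, b⟫ + (L : ℝ) * ‖b‖ ^ 2 * t) := by
    apply intervalIntegral.integral_mono_on (by norm_num) (hcont.intervalIntegrable 0 1)
    · exact (Continuous.intervalIntegrable (by continuity) 0 1)
    · exact hbound
  have hIval : (∫ t in (0:ℝ)..1, (⟪gradient f x, b⟫ + (L : ℝ) * ‖b‖ ^ 2 * t))
      = ⟪gradient f x, b⟫ + (L : ℝ) / 2 * ‖b‖ ^ 2 := by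
    rw [intervalIntegral.integral_add (intervalIntegrable_const)
      ((intervalIntegral.intervalIntegrable_id).const_mul _),
      intervalIntegral.integral_const_mul, integral_id]
    simp
    ring
  have h7 : x + (1 : ℝ) • b = y := by rw [hb]; abel_nf; simp
  have h8 : x + (0 : ℝ) • b = x := by simp
  rw [h7, h8] at hint
  linarith [hImono.trans_eq hIval, hint.ge, hint.le]

end Aux

/-- One step of blended gradient descent: descent estimate for the BGD update
`w_f^{t+1} = (1−ρ)w_f^t + ρ w^t − η ∇f(w^t)`, `w^{t+1} = proj_Q(w_f^{t+1})`. -/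
theorem bgd_descent_estimate {M : ℕ}
    (f : EuclideanSpace ℝ (Fin M) → ℝ) (hf : Differentiable ℝ f)
    (L : ℝ≥0) (hL : LipschitzWith L (gradient f))
    (Q : Set (EuclideanSpace ℝ (Fin M))) (hQne : Q.Nonempty) (hQcl : IsClosed Q)
    (ρ η : ℝ) (hρ : ρ ∈ Set.Ioo (0 : ℝ) 1) (hη : 0 < η)
    (wt wf wf1 wt1 : EuclideanSpace ℝ (Fin M))
    (hwt : wt ∈ Q)
    (hupdate : wf1 = (1 - ρ) • wf + ρ • wt - η • gradient f wt)
    (hwt1 : wt1 ∈ Q) (hproj : ∀ w ∈ Q, ‖wt1 - wf1‖ ≤ ‖w - wf1‖) :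
    f wt1 - f wt ≤
      -(1 / 2) * ((1 - ρ) / η * (‖wt1 - wf‖ ^ 2 - ‖wt - wf‖ ^ 2)
        + (ρ / η - (L : ℝ)) * ‖wt1 - wt‖ ^ 2) := by
  set g := gradient f wt with hg
  set a := wt1 - wf with ha
  set c := wt - wf with hc
  set b := wt1 - wt with hbdef
  have hproj' : ‖wt1 - wf1‖ ^ 2 ≤ ‖wt - wf1‖ ^ 2 := by
    have := hproj wt hwt
    exact pow_le_pow_left₀ (norm_nonneg _) this 2
  have he1 : wt1 - wf1 = a - ρ • c + η • g := by
    rw [hupdate, ha, hc, hg]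
    module
  have he2 : wt - wf1 = c - ρ • c + η • g := by
    rw [hupdate, hc, hg]
    module
  have hD : (1 - ρ) * (‖a‖ ^ 2 - ‖c‖ ^ 2) + ρ * ‖b‖ ^ 2
      + 2 * η * (inner ℝ g b : ℝ) ≤ 0 := by
    rw [he1, he2] at hproj'
    have hab : b = a - c := by rw [hbdef, ha, hc]; abel
    have expand : ∀ v : EuclideanSpace ℝ (Fin M), ‖v‖ ^ 2 = (inner ℝ v v : ℝ) := fun v =>
      (real_inner_self_eq_norm_sq v).symm
    rw [hab]
    simp only [expand] at hproj' ⊢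
    simp only [inner_sub_left, inner_sub_right, inner_add_left, inner_add_right,
      inner_smul_left, inner_smul_right, RCLike.conj_to_real, conj_trivial] at hproj' ⊢
    have hcomm1 : (inner ℝ c a : ℝ) = inner ℝ a c := real_inner_comm a c
    have hcomm2 : (inner ℝ g a : ℝ) = inner ℝ a g := real_inner_comm a g
    have hcomm3 : (inner ℝ g c : ℝ) = inner ℝ c g := real_inner_comm c g
    nlinarith [hproj']
  have hdesc := descent_lemma f hf L hL wt wt1
  rw [← hbdef, ← hg] at hdesc
  have hIG : (inner ℝ g b : ℝ) ≤ -(((1 - ρ) * (‖a‖ ^ 2 - ‖c‖ ^ 2) + ρ * ‖b‖ ^ 2) / (2 * η)) := by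
    rw [le_neg, div_le_iff₀ (by positivity)]
    nlinarith [hD]
  have h2η : (2 : ℝ) * η ≠ 0 := by positivity
  have : f wt1 - f wt ≤ (inner ℝ g b : ℝ) + (L : ℝ) / 2 * ‖b‖ ^ 2 := by linarith [hdesc]
  have hfin : f wt1 - f wt
      ≤ -(((1 - ρ) * (‖a‖ ^ 2 - ‖c‖ ^ 2) + ρ * ‖b‖ ^ 2) / (2 * η)) + (L : ℝ) / 2 * ‖b‖ ^ 2 := by
    linarith [hIG]
  calc f wt1 - f wt
      ≤ -(((1 - ρ) * (‖a‖ ^ 2 - ‖c‖ ^ 2) + ρ * ‖b‖ ^ 2) / (2 * η))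
        + (L : ℝ) / 2 * ‖b‖ ^ 2 := hfin
    _ = -(1 / 2) * ((1 - ρ) / η * (‖a‖ ^ 2 - ‖c‖ ^ 2) + (ρ / η - (L : ℝ)) * ‖b‖ ^ 2) := by
        field_simp
        ring
end

section
/- Let f(v,w) be the population loss of the two-layer binarized-ReLU network, f(v,w) = (1/8)[v^T(I+11^T)v − 2v^T((1 − 2θ(w,w*)/π)I + 11^T)v* + (v*)^T(I+11^T)v*], with ‖w*‖=1. For θ(w,w*) ∈ (0, π), the gradient of f with respect to w is ∂f/∂w = −(v^T v*)/(2π‖w‖) · (I − ww^T/‖w‖²)w* / ‖(I − ww^T/‖w‖²)w*‖. -/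
open InnerProductGeometry

/-- The population loss of the two-layer binarized-ReLU network, as a function of
the first-layer weights `w` (given `v`, `v*`, `w*`). -/
noncomputable def popLoss {m n : ℕ} (v vs : EuclideanSpace ℝ (Fin m))
    (ws w : EuclideanSpace ℝ (Fin n)) : ℝ :=
  1 / 8 * ((∑ i, v i ^ 2 + (∑ i, v i) ^ 2)
    - 2 * ((1 - 2 * angle w ws / Real.pi) * (∑ i, v i * vs i)
        + (∑ i, v i) * (∑ i, vs i))
    + (∑ i, vs i ^ 2 + (∑ i, vs i) ^ 2))

/-- For `θ(w, w*) ∈ (0, π)` the gradient of the population loss with respect to `w` is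
`−(v^T v*)/(2π‖w‖) · (I − ww^T/‖w‖²)w* / ‖(I − ww^T/‖w‖²)w*‖`. -/
theorem gradient_popLoss {m n : ℕ}
    (v vs : EuclideanSpace ℝ (Fin m)) (w ws : EuclideanSpace ℝ (Fin n))
    (hw : w ≠ 0) (hws : ‖ws‖ = 1)
    (hθ0 : 0 < angle w ws) (hθπ : angle w ws < Real.pi) :
    gradient (popLoss v vs ws) w
      = (-(∑ i, v i * vs i) / (2 * Real.pi * ‖w‖)) •
          ‖ws - ((inner ℝ w ws : ℝ) / ‖w‖ ^ 2) • w‖⁻¹ •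
            (ws - ((inner ℝ w ws : ℝ) / ‖w‖ ^ 2) • w) := by
  have hnw : (0:ℝ) < ‖w‖ := norm_pos_iff.mpr hw
  set c : ℝ := (inner ℝ w ws : ℝ) with hc
  have hangle : angle w ws = Real.arccos (c / ‖w‖) := by
    rw [angle, hws, mul_one]
  have hq1 : c / ‖w‖ < 1 := Real.arccos_pos.mp (hangle ▸ hθ0)
  have hq2 : -1 < c / ‖w‖ := by
    by_contra h; push_neg at h
    rw [hangle, Real.arccos_eq_pi.mpr h] at hθπ; exact lt_irrefl _ hθπ
  have hqsq : (0:ℝ) < 1 - (c / ‖w‖) ^ 2 := by nlinarith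
  set r : ℝ := Real.sqrt (1 - (c / ‖w‖) ^ 2) with hr
  have hrpos : 0 < r := Real.sqrt_pos.mpr hqsq
  have hrsq : r ^ 2 = 1 - (c / ‖w‖) ^ 2 := Real.sq_sqrt hqsq.le
  have hnormu : ‖ws - (c / ‖w‖ ^ 2) • w‖ = r := by
    have h1 : ‖ws - (c / ‖w‖ ^ 2) • w‖ ^ 2 = 1 - (c / ‖w‖) ^ 2 := by
      rw [norm_sub_sq_real, hws, norm_smul, real_inner_smul_right,
        show (inner ℝ ws w : ℝ) = c from by rw [hc, real_inner_comm]]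
      rw [Real.norm_eq_abs, abs_div, abs_of_nonneg (by positivity : (0:ℝ) ≤ ‖w‖ ^ 2),
        mul_pow, div_pow, sq_abs]
      field_simp
      ring
    rw [← Real.sqrt_sq (norm_nonneg _), h1]
  -- derivative of inner
  have hd_inner : HasFDerivAt (fun x : EuclideanSpace ℝ (Fin n) => (inner ℝ x ws : ℝ))
      (innerSL ℝ ws) w := by
    have h : (fun x : EuclideanSpace ℝ (Fin n) => (inner ℝ x ws : ℝ)) = ⇑(innerSL ℝ ws) := by
      funext x; rw [innerSL_apply_apply]; exact real_inner_comm ws x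
    rw [h]; exact (innerSL ℝ ws).hasFDerivAt
  -- derivative of norm
  have hd_norm : HasFDerivAt (fun x : EuclideanSpace ℝ (Fin n) => ‖x‖)
      (‖w‖⁻¹ • innerSL ℝ w) w := by
    have h1 : HasFDerivAt (fun x : EuclideanSpace ℝ (Fin n) => ‖x‖ ^ 2)
        (2 • innerSL ℝ w) w := by
      simpa using (hasFDerivAt_id w).norm_sq
    have h2 := h1.sqrt (by positivity : ‖w‖ ^ 2 ≠ 0)
    have he : (fun x : EuclideanSpace ℝ (Fin n) => Real.sqrt (‖x‖ ^ 2))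
        = fun x : EuclideanSpace ℝ (Fin n) => ‖x‖ := by
      funext x; exact Real.sqrt_sq (norm_nonneg x)
    rw [he] at h2
    have h3 : (1 / (2 * Real.sqrt (‖w‖ ^ 2))) • ((2:ℕ) • innerSL ℝ w)
        = ‖w‖⁻¹ • innerSL ℝ w := by
      rw [Real.sqrt_sq hnw.le]
      ext x
      simp [smul_smul]
      ring
    rw [h3] at h2
    exact h2
  -- derivative of inverse norm
  have hd_inv : HasFDerivAt (fun x : EuclideanSpace ℝ (Fin n) => ‖x‖⁻¹)
      ((-(‖w‖ ^ 2)⁻¹) • (‖w‖⁻¹ • innerSL ℝ w)) w := by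
    simpa [Function.comp_def] using (hasDerivAt_inv hnw.ne').comp_hasFDerivAt w hd_norm
  -- derivative of quotient
  have hd_q : HasFDerivAt (fun x : EuclideanSpace ℝ (Fin n) => (inner ℝ x ws : ℝ) * ‖x‖⁻¹)
      (c • ((-(‖w‖ ^ 2)⁻¹) • (‖w‖⁻¹ • innerSL ℝ w)) + ‖w‖⁻¹ • innerSL ℝ ws) w :=
    hd_inner.mul hd_inv
  -- derivative of angle
  have hd_angle : HasFDerivAt (fun x : EuclideanSpace ℝ (Fin n) => angle x ws)
      ((-(1 / r)) • (c • ((-(‖w‖ ^ 2)⁻¹) • (‖w‖⁻¹ • innerSL ℝ w)) + ‖w‖⁻¹ • innerSL ℝ ws)) w := by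
    have hfe : (fun x : EuclideanSpace ℝ (Fin n) => angle x ws)
        = Real.arccos ∘ (fun x : EuclideanSpace ℝ (Fin n) => (inner ℝ x ws : ℝ) * ‖x‖⁻¹) := by
      funext x
      simp [angle, hws, Function.comp, div_eq_mul_inv]
    rw [hfe, hr]
    exact (Real.hasDerivAt_arccos (ne_of_gt hq2) (ne_of_lt hq1)).comp_hasFDerivAt_of_eq
      w hd_q (div_eq_mul_inv c ‖w‖)
  -- derivative of popLoss
  set S : ℝ := ∑ i, v i * vs i with hS
  have hpl : popLoss v vs ws = fun x : EuclideanSpace ℝ (Fin n) =>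
      (1 / 8 * ((∑ i, v i ^ 2 + (∑ i, v i) ^ 2) + (∑ i, vs i ^ 2 + (∑ i, vs i) ^ 2))
        - S / 4 - (∑ i, v i) * (∑ i, vs i) / 4)
      + (S / (2 * Real.pi)) * angle x ws := by
    funext x
    have hπ : Real.pi ≠ 0 := Real.pi_ne_zero
    simp only [popLoss, hS]
    field_simp
    ring
  have hd_loss := (hd_angle.const_mul (S / (2 * Real.pi))).const_add
    (1 / 8 * ((∑ i, v i ^ 2 + (∑ i, v i) ^ 2) + (∑ i, vs i ^ 2 + (∑ i, vs i) ^ 2))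
        - S / 4 - (∑ i, v i) * (∑ i, vs i) / 4)
  rw [← hpl] at hd_loss
  -- identify the gradient
  have hG : HasGradientAt (popLoss v vs ws)
      ((-S / (2 * Real.pi * ‖w‖)) • r⁻¹ • (ws - (c / ‖w‖ ^ 2) • w)) w := by
    rw [hasGradientAt_iff_hasFDerivAt]
    have heq : (InnerProductSpace.toDual ℝ (EuclideanSpace ℝ (Fin n)))
        ((-S / (2 * Real.pi * ‖w‖)) • r⁻¹ • (ws - (c / ‖w‖ ^ 2) • w))
        = (S / (2 * Real.pi)) • (-(1 / r)) •
            (c • (-(‖w‖ ^ 2)⁻¹) • ‖w‖⁻¹ • innerSL ℝ w + ‖w‖⁻¹ • innerSL ℝ ws) := by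
      ext x
      simp only [InnerProductSpace.toDual_apply_apply, ContinuousLinearMap.smul_apply,
        ContinuousLinearMap.add_apply, innerSL_apply_apply, inner_smul_left, inner_sub_left,
        RCLike.star_def, starRingEnd_apply, star_trivial, smul_eq_mul]
      field_simp
      ring
    rw [heq]
    exact hd_loss
  rw [hnormu]
  exact hG.gradient
end

section
/- Let θ = θ(w,w*) ∈ (0, π) with ‖w*‖ = 1 and w ≠ 0. Then the inner product of the expected coarse gradient E_Z[g(v,w;Z)] with the true population gradient ∂f/∂w(v,w) equals sin(θ)/(2(2π)^{3/2}‖w‖)·(v^T v*)² ≥ 0. -/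
open InnerProductGeometry

/-- The inner product between the expected coarse gradient and the true population
gradient w.r.t. `w` equals `sin(θ)/(2(2π)^{3/2}‖w‖) (v^T v*)² ≥ 0`. -/
theorem coarse_grad_inner_true_grad {m n : ℕ}
    (v vs : EuclideanSpace ℝ (Fin m))
    (w ws : EuclideanSpace ℝ (Fin n)) (hw : w ≠ 0) (hws : ‖ws‖ = 1)
    (hθ0 : 0 < angle w ws) (hθπ : angle w ws < Real.pi) :
    (inner ℝ
        (((∑ i, v i ^ 2 + (∑ i, v i) ^ 2 - (∑ i, v i) * (∑ i, vs i) + ∑ i, v i * vs i)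
              / (2 * Real.sqrt (2 * Real.pi))) • ‖w‖⁻¹ • w
          - (Real.cos (angle w ws / 2) * (∑ i, v i * vs i) / Real.sqrt (2 * Real.pi)) •
              ‖‖w‖⁻¹ • w + ws‖⁻¹ • (‖w‖⁻¹ • w + ws))
        ((-(∑ i, v i * vs i) / (2 * Real.pi * ‖w‖)) •
          ‖ws - ((inner ℝ w ws : ℝ) / ‖w‖ ^ 2) • w‖⁻¹ •
            (ws - ((inner ℝ w ws : ℝ) / ‖w‖ ^ 2) • w)) : ℝ)
      = Real.sin (angle w ws) / (2 * Real.sqrt (2 * Real.pi) ^ 3 * ‖w‖)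
          * (∑ i, v i * vs i) ^ 2 := by
  set θ := angle w ws with hθ
  have hwn : (0:ℝ) < ‖w‖ := norm_pos_iff.mpr hw
  have hwn' : ‖w‖ ≠ 0 := ne_of_gt hwn
  set c : ℝ := (inner ℝ w ws : ℝ) with hc
  have hcos : Real.cos θ = c / ‖w‖ := by
    rw [hθ, cos_angle, hws, mul_one, hc]
  have hsinpos : 0 < Real.sin θ := Real.sin_pos_of_pos_of_lt_pi hθ0 hθπ
  have hpi : (0:ℝ) < Real.pi := Real.pi_pos
  have hcoshalf : 0 < Real.cos (θ / 2) := by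
    apply Real.cos_pos_of_mem_Ioo
    constructor
    · linarith
    · linarith
  set p : EuclideanSpace ℝ (Fin n) := ws - (c / ‖w‖ ^ 2) • w with hp
  have hwp : (inner ℝ w p : ℝ) = 0 := by
    rw [hp, inner_sub_right, real_inner_smul_right, real_inner_self_eq_norm_sq, ← hc]
    field_simp
    ring
  have hwsp : (inner ℝ ws p : ℝ) = Real.sin θ ^ 2 := by
    have h1 : (inner ℝ ws p : ℝ) = 1 - c * (c / ‖w‖ ^ 2) := by
      rw [hp, inner_sub_right, real_inner_smul_right, real_inner_comm w ws, ← hc,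
        real_inner_self_eq_norm_sq, hws]
      ring
    rw [h1, Real.sin_sq, hcos]
    field_simp
  have hpn : ‖p‖ = Real.sin θ := by
    have h2 : ‖p‖ ^ 2 = Real.sin θ ^ 2 := by
      rw [← real_inner_self_eq_norm_sq]
      nth_rewrite 1 [hp]
      rw [inner_sub_left, real_inner_smul_left, hwp, hwsp]
      ring
    calc ‖p‖ = Real.sqrt (‖p‖ ^ 2) := (Real.sqrt_sq (norm_nonneg _)).symm
    _ = Real.sqrt (Real.sin θ ^ 2) := by rw [h2]
    _ = Real.sin θ := Real.sqrt_sq hsinpos.le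
  have hu : ‖‖w‖⁻¹ • w + ws‖ = 2 * Real.cos (θ / 2) := by
    have h3 : ‖‖w‖⁻¹ • w + ws‖ ^ 2 = (2 * Real.cos (θ / 2)) ^ 2 := by
      have hun : ‖‖w‖⁻¹ • w‖ = 1 := by
        rw [norm_smul, norm_inv, norm_norm]
        field_simp
      rw [← real_inner_self_eq_norm_sq]
      simp only [inner_add_left, inner_add_right, real_inner_smul_left,
        real_inner_smul_right, real_inner_self_eq_norm_sq, ← hc]
      rw [real_inner_comm w ws, ← hc, hws, hun]
      have h4 : Real.cos (θ / 2) ^ 2 = (1 + Real.cos θ) / 2 := by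
        have h := Real.cos_sq (θ / 2)
        rw [show (2:ℝ) * (θ / 2) = θ by ring] at h
        rw [h]; ring
      rw [show (2 * Real.cos (θ / 2)) ^ 2 = 4 * (Real.cos (θ / 2) ^ 2) by ring, h4, hcos]
      field_simp
      ring
    calc ‖‖w‖⁻¹ • w + ws‖ = Real.sqrt (‖‖w‖⁻¹ • w + ws‖ ^ 2) :=
        (Real.sqrt_sq (norm_nonneg _)).symm
    _ = Real.sqrt ((2 * Real.cos (θ / 2)) ^ 2) := by rw [h3]
    _ = 2 * Real.cos (θ / 2) := Real.sqrt_sq (by linarith)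
  have hsq : Real.sqrt (2 * Real.pi) ^ 2 = 2 * Real.pi := Real.sq_sqrt (by positivity)
  have hsqrtpos : 0 < Real.sqrt (2 * Real.pi) := Real.sqrt_pos.mpr (by positivity)
  simp only [inner_sub_left, inner_add_left, real_inner_smul_left, real_inner_smul_right,
    hwp, hwsp, hpn, hu]
  have h5 : Real.sqrt (2 * Real.pi) ^ 3 = Real.sqrt (2 * Real.pi) * (2 * Real.pi) := by
    rw [pow_succ, hsq]
    ring
  rw [h5]
  field_simp
  ring
end
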